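/- In the discrete-time standard Dynkin game with X ≤ Z ≤ Y, the stopping times τ*_t = min{u ∈ {t,...,T} : V_u = X_u} and σ*_t = min{u ∈ {t,...,T} : V_u = Y_u} form a Nash equilibrium: for all stopping times τ, σ with values in {t,...,T}, E[R(τ*_t, σ) | F_t] ≥ E[R(τ*_t, σ*_t) | F_t] ≥ E[R(τ, σ*_t) | F_t], where R(τ,σ) = X_τ 1{τ<σ} + Y_σ 1{σ<τ} + Z_σ 1{σ=τ}. -/

import Mathlib

open MeasureTheory Filter Set

/-- Payoff of the Dynkin game: `X_τ` if `τ < σ`, `Y_σ` if `σ < τ`, `Z_σ` if `σ = τ`. -/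
noncomputable def payoffD {Ω : Type*} (X Y Z : ℕ → Ω → ℝ) (τ σ : Ω → ℕ) (ω : Ω) : ℝ :=
  if τ ω < σ ω then X (τ ω) ω else if σ ω < τ ω then Y (σ ω) ω else Z (σ ω) ω


/-- Representation of a doubly-stopped value as a finite sum of indicators. -/
lemma dynkin_pair_rep {Ω : Type*} (N : ℕ) (τ σ : Ω → ℕ) (hτ : ∀ ω, τ ω ≤ N)
    (hσ : ∀ ω, σ ω ≤ N) (U : ℕ → ℕ → Ω → ℝ) :
    (fun ω => U (τ ω) (σ ω) ω)
      = fun ω => ∑ a ∈ Finset.range (N + 1), ∑ b ∈ Finset.range (N + 1),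
          ({ω' | τ ω' = a} ∩ {ω' | σ ω' = b}).indicator (U a b) ω := by
  funext ω
  rw [Finset.sum_eq_single (τ ω)]
  · rw [Finset.sum_eq_single (σ ω)]
    · rw [Set.indicator_of_mem (by exact ⟨rfl, rfl⟩)]
    · intro b _ hb
      rw [Set.indicator_of_notMem]
      intro hmem
      exact hb hmem.2.symm
    · intro h
      exact absurd (Finset.mem_range.mpr (Nat.lt_succ_of_le (hσ ω))) h
  · intro a _ ha
    apply Finset.sum_eq_zero
    intro b _
    rw [Set.indicator_of_notMem]
    intro hmem
    exact ha hmem.1.symm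
  · intro h
    exact absurd (Finset.mem_range.mpr (Nat.lt_succ_of_le (hτ ω))) h

lemma dynkin_integrable_pair {Ω : Type*} {m0 : MeasurableSpace Ω} (μ : Measure Ω)
    (N : ℕ) (τ σ : Ω → ℕ) (hτ : ∀ ω, τ ω ≤ N) (hσ : ∀ ω, σ ω ≤ N)
    (hτm : ∀ a, MeasurableSet {ω | τ ω = a}) (hσm : ∀ b, MeasurableSet {ω | σ ω = b})
    (U : ℕ → ℕ → Ω → ℝ) (hU : ∀ a b, a ≤ N → b ≤ N → Integrable (U a b) μ) :
    Integrable (fun ω => U (τ ω) (σ ω) ω) μ := by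
  rw [dynkin_pair_rep N τ σ hτ hσ U]
  apply integrable_finset_sum
  intro a ha
  apply integrable_finset_sum
  intro b hb
  exact (hU a b (Nat.lt_succ_iff.mp (Finset.mem_range.mp ha))
    (Nat.lt_succ_iff.mp (Finset.mem_range.mp hb))).indicator ((hτm a).inter (hσm b))

lemma dynkin_sm_pair {Ω : Type*} (m : MeasurableSpace Ω)
    (N : ℕ) (τ σ : Ω → ℕ) (hτ : ∀ ω, τ ω ≤ N) (hσ : ∀ ω, σ ω ≤ N)
    (hτm : ∀ a, a ≤ N → MeasurableSet[m] {ω | τ ω = a})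
    (hσm : ∀ b, b ≤ N → MeasurableSet[m] {ω | σ ω = b})
    (U : ℕ → ℕ → Ω → ℝ) (hU : ∀ a b, a ≤ N → b ≤ N → StronglyMeasurable[m] (U a b)) :
    StronglyMeasurable[m] (fun ω => U (τ ω) (σ ω) ω) := by
  rw [dynkin_pair_rep N τ σ hτ hσ U]
  apply Finset.stronglyMeasurable_fun_sum
  intro a ha
  apply Finset.stronglyMeasurable_fun_sum
  intro b hb
  have haN := Nat.lt_succ_iff.mp (Finset.mem_range.mp ha)
  have hbN := Nat.lt_succ_iff.mp (Finset.mem_range.mp hb)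
  exact (hU a b haN hbN).indicator ((hτm a haN).inter (hσm b hbN))

lemma st_eq {Ω : Type*} {m0 : MeasurableSpace Ω} {ℱ : Filtration ℕ m0} {ρ : Ω → ℕ}
    (hρ : IsStoppingTime ℱ (fun ω => (ρ ω : WithTop ℕ))) (a : ℕ) :
    MeasurableSet[ℱ a] {ω | ρ ω = a} := by
  simpa using hρ.measurableSet_eq a

lemma st_le {Ω : Type*} {m0 : MeasurableSpace Ω} {ℱ : Filtration ℕ m0} {ρ : Ω → ℕ}
    (hρ : IsStoppingTime ℱ (fun ω => (ρ ω : WithTop ℕ))) (a : ℕ) :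
    MeasurableSet[ℱ a] {ω | ρ ω ≤ a} := by
  simpa using hρ a

lemma st_of {Ω : Type*} {m0 : MeasurableSpace Ω} {ℱ : Filtration ℕ m0} {ρ : Ω → ℕ}
    (h : ∀ a : ℕ, MeasurableSet[ℱ a] {ω | ρ ω ≤ a}) :
    IsStoppingTime ℱ (fun ω => (ρ ω : WithTop ℕ)) := by
  intro a
  simpa using h a

lemma st_min {Ω : Type*} {m0 : MeasurableSpace Ω} {ℱ : Filtration ℕ m0} {τ σ : Ω → ℕ}
    (hτ : IsStoppingTime ℱ (fun ω => (τ ω : WithTop ℕ)))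
    (hσ : IsStoppingTime ℱ (fun ω => (σ ω : WithTop ℕ))) :
    IsStoppingTime ℱ (fun ω => ((min (τ ω) (σ ω) : ℕ) : WithTop ℕ)) := by
  refine st_of ?_
  intro a
  have : {ω | min (τ ω) (σ ω) ≤ a} = {ω | τ ω ≤ a} ∪ {ω | σ ω ≤ a} := by
    ext ω; simp [min_le_iff]
  rw [this]
  exact (st_le hτ a).union (st_le hσ a)

lemma st_min_const {Ω : Type*} {m0 : MeasurableSpace Ω} {ℱ : Filtration ℕ m0} {τ : Ω → ℕ}
    (hτ : IsStoppingTime ℱ (fun ω => (τ ω : WithTop ℕ))) (u : ℕ) :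
    IsStoppingTime ℱ (fun ω => ((min (τ ω) u : ℕ) : WithTop ℕ)) :=
  st_min (σ := fun _ => u) hτ (st_of (fun a => by
    by_cases h : u ≤ a
    · simp [h]
    · simp [h]))

section
variable {Ω : Type*} {m0 : MeasurableSpace Ω}

/-- Core optional-sampling inequality: if `V` behaves like a submartingale strictly
before the stopping time `ρ` (on `[t, T)`), then `V t ≤ E[V_ρ | ℱ t]`. -/
lemma dynkin_core {μ : Measure Ω} [IsProbabilityMeasure μ] {ℱ : Filtration ℕ m0} (T : ℕ)
    (V : ℕ → Ω → ℝ) (hVa : ∀ u, u ≤ T → StronglyMeasurable[ℱ u] (V u))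
    (hVi : ∀ u, Integrable (V u) μ)
    (t : ℕ) (ht : t ≤ T) (ρ : Ω → ℕ) (hρ : IsStoppingTime ℱ (fun ω => (ρ ω : WithTop ℕ)))
    (hρt : ∀ ω, t ≤ ρ ω) (hρT : ∀ ω, ρ ω ≤ T)
    (hstep : ∀ u, t ≤ u → u < T → ∀ᵐ ω ∂μ, u < ρ ω → V u ω ≤ (μ[V (u + 1) | ℱ u]) ω) :
    V t ≤ᵐ[μ] μ[(fun ω => V (ρ ω) ω) | ℱ t] := by
  set g : Ω → ℝ := fun ω => V (ρ ω) ω with hg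
  have hρm : ∀ a, MeasurableSet {ω | ρ ω = a} := fun a => ℱ.le a _ (st_eq hρ a)
  have hgi : Integrable g μ :=
    dynkin_integrable_pair μ T ρ ρ hρT hρT hρm hρm (fun a _ => V a)
      (fun a _ _ _ => hVi a)
  -- the stopped process
  set G : ℕ → Ω → ℝ := fun u ω => V (min (ρ ω) u) ω with hG
  have hGi : ∀ u, u ≤ T → Integrable (G u) μ := by
    intro u hu
    exact dynkin_integrable_pair μ T (fun ω => min (ρ ω) u) (fun ω => min (ρ ω) u)
      (fun ω => le_trans (min_le_left _ _) (hρT ω))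
      (fun ω => le_trans (min_le_left _ _) (hρT ω))
      (fun a => ℱ.le a _ (st_eq (st_min_const hρ u) a))
      (fun a => ℱ.le a _ (st_eq (st_min_const hρ u) a))
      (fun a _ => V a) (fun a _ haT _ => hVi a)
  have hGsm : ∀ u, u ≤ T → StronglyMeasurable[ℱ u] (G u) := by
    intro u hu
    exact dynkin_sm_pair (ℱ u) u (fun ω => min (ρ ω) u) (fun ω => min (ρ ω) u)
      (fun ω => min_le_right _ _) (fun ω => min_le_right _ _)
      (fun a hau => ℱ.mono hau _ (st_eq (st_min_const hρ u) a))
      (fun a hau => ℱ.mono hau _ (st_eq (st_min_const hρ u) a))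
      (fun a _ => V a) (fun a _ hau _ => (hVa a (hau.trans hu)).mono (ℱ.mono hau))
  have hgsm : StronglyMeasurable[ℱ T] g :=
    dynkin_sm_pair (ℱ T) T ρ ρ hρT hρT
      (fun a haT => ℱ.mono haT _ (st_eq hρ a))
      (fun a haT => ℱ.mono haT _ (st_eq hρ a))
      (fun a _ => V a) (fun a _ haT _ => (hVa a haT).mono (ℱ.mono haT))
  have main : ∀ n u, u + n = T → t ≤ u → G u ≤ᵐ[μ] μ[g | ℱ u] := by
    intro n
    induction n with
    | zero =>
      intro u huT _
      simp only [Nat.add_zero] at huT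
      subst huT
      have hGu : G u = g := by
        funext ω
        simp only [hG, hg, min_eq_left (hρT ω)]
      rw [hGu, condExp_of_stronglyMeasurable (ℱ.le u) hgsm hgi]
    | succ n ih =>
      intro u huT htu
      have hu1T : u + 1 + n = T := by omega
      have huT' : u < T := by omega
      have ih' : G (u + 1) ≤ᵐ[μ] μ[g | ℱ (u + 1)] := ih (u + 1) hu1T (by omega)
      -- the event that we have not stopped by time u
      set A : Set Ω := {ω | ρ ω ≤ u}ᶜ with hA
      have hAm : MeasurableSet[ℱ u] A := (st_le hρ u).compl
      set d : Ω → ℝ := fun ω => V (u + 1) ω - V u ω with hd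
      have hdi : Integrable d μ := (hVi (u + 1)).sub (hVi u)
      have hdec : G (u + 1) = fun ω => G u ω + A.indicator d ω := by
        funext ω
        by_cases hc : ρ ω ≤ u
        · have h1 : min (ρ ω) (u + 1) = ρ ω := min_eq_left (by omega)
          have h2 : min (ρ ω) u = ρ ω := min_eq_left hc
          have hmem : ω ∉ A := not_not_intro hc
          simp only [hG, h1, h2, Set.indicator_of_notMem hmem]
          simp
        · have h1 : min (ρ ω) (u + 1) = u + 1 := min_eq_right (by omega)
          have h2 : min (ρ ω) u = u := min_eq_right (by omega)
          have hmem : ω ∈ A := hc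
          simp only [hG, h1, h2, Set.indicator_of_mem hmem, hd]
          ring_nf
      have hstep' : G u ≤ᵐ[μ] μ[G (u + 1) | ℱ u] := by
        have hce1 : μ[G (u + 1) | ℱ u]
            =ᵐ[μ] μ[G u | ℱ u] + μ[A.indicator d | ℱ u] := by
          rw [hdec]
          exact condExp_add (hGi u (by omega)) (hdi.indicator (ℱ.le u _ hAm)) _
        have hce2 : μ[G u | ℱ u] = G u :=
          condExp_of_stronglyMeasurable (ℱ.le u) (hGsm u (by omega)) (hGi u (by omega))
        have hce3 : μ[A.indicator d | ℱ u] =ᵐ[μ] A.indicator (μ[d | ℱ u]) :=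
          condExp_indicator hdi hAm
        have hce4 : μ[d | ℱ u] =ᵐ[μ] fun ω => (μ[V (u + 1) | ℱ u]) ω - V u ω := by
          refine (condExp_sub (hVi (u + 1)) (hVi u) _).trans ?_
          have : μ[V u | ℱ u] = V u :=
            condExp_of_stronglyMeasurable (ℱ.le u) (hVa u (by omega)) (hVi u)
          rw [this]
          rfl
        have hce5 : A.indicator (μ[d | ℱ u])
            =ᵐ[μ] A.indicator (fun ω => (μ[V (u + 1) | ℱ u]) ω - V u ω) := by
          filter_upwards [hce4] with ω hω
          by_cases hmem : ω ∈ A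
          · simp only [Set.indicator_of_mem hmem]; rw [hω]
          · simp only [Set.indicator_of_notMem hmem]
        filter_upwards [hce1, hce3.trans hce5, hstep u htu huT'] with ω h1 h3 hst
        rw [h1, hce2]
        simp only [Pi.add_apply, h3]
        have : 0 ≤ A.indicator (fun ω => (μ[V (u + 1) | ℱ u]) ω - V u ω) ω := by
          by_cases hmem : ω ∈ A
          · rw [Set.indicator_of_mem hmem]
            have hlt : u < ρ ω := by simpa [hA, not_le] using hmem
            have := hst hlt
            linarith
          · rw [Set.indicator_of_notMem hmem]
        linarith
      refine hstep'.trans ?_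
      have hmono : μ[G (u + 1) | ℱ u] ≤ᵐ[μ] μ[μ[g | ℱ (u + 1)] | ℱ u] :=
        condExp_mono (hGi (u + 1) (by omega)) integrable_condExp ih'
      refine hmono.trans ?_
      exact (condExp_condExp_of_le (ℱ.mono (Nat.le_succ u)) (ℱ.le (u + 1))).le
  have := main (T - t) t (by omega) le_rfl
  have hGt : G t = V t := by
    funext ω
    simp only [hG, min_eq_right (hρt ω)]
  rwa [hGt] at this


/-- Mirror image of `dynkin_core`: supermartingale before `ρ`. -/
lemma dynkin_core_ge {μ : Measure Ω} [IsProbabilityMeasure μ] {ℱ : Filtration ℕ m0} (T : ℕ)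
    (V : ℕ → Ω → ℝ) (hVa : ∀ u, u ≤ T → StronglyMeasurable[ℱ u] (V u))
    (hVi : ∀ u, Integrable (V u) μ)
    (t : ℕ) (ht : t ≤ T) (ρ : Ω → ℕ) (hρ : IsStoppingTime ℱ (fun ω => (ρ ω : WithTop ℕ)))
    (hρt : ∀ ω, t ≤ ρ ω) (hρT : ∀ ω, ρ ω ≤ T)
    (hstep : ∀ u, t ≤ u → u < T → ∀ᵐ ω ∂μ, u < ρ ω → (μ[V (u + 1) | ℱ u]) ω ≤ V u ω) :
    μ[(fun ω => V (ρ ω) ω) | ℱ t] ≤ᵐ[μ] V t := by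
  have h := dynkin_core T (fun u => -V u) (fun u hu => (hVa u hu).neg)
    (fun u => (hVi u).neg) t ht ρ hρ hρt hρT ?_
  · have hneg : μ[(fun ω => (-V (ρ ω)) ω) | ℱ t] =ᵐ[μ] -μ[(fun ω => V (ρ ω) ω) | ℱ t] := by
      have : (fun ω => (-V (ρ ω)) ω) = -(fun ω => V (ρ ω) ω) := rfl
      rw [this]
      exact condExp_neg _ _
    filter_upwards [h, hneg] with ω h1 h2
    have : (-V t) ω ≤ (-μ[(fun ω => V (ρ ω) ω) | ℱ t]) ω := by rw [← h2]; exact h1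
    simpa using this
  · intro u htu huT
    have hneg : μ[-V (u + 1) | ℱ u] =ᵐ[μ] -μ[V (u + 1) | ℱ u] := condExp_neg _ _
    filter_upwards [hstep u htu huT, hneg] with ω h1 h2
    intro hlt
    have := h1 hlt
    have h2' : (μ[-V (u + 1) | ℱ u]) ω = -((μ[V (u + 1) | ℱ u]) ω) := h2
    simp only [Pi.neg_apply, h2']
    linarith

end

/-- In the discrete-time standard Dynkin game with `X ≤ Z ≤ Y`, the hitting times
`τ*_t = min {u ∈ [t,T] : V_u = X_u}` and `σ*_t = min {u ∈ [t,T] : V_u = Y_u}` form a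
Nash equilibrium. -/
theorem stmt2 {Ω : Type*} {m0 : MeasurableSpace Ω} (μ : Measure Ω) [IsProbabilityMeasure μ]
    (ℱ : Filtration ℕ m0) (T : ℕ)
    (X Y Z V : ℕ → Ω → ℝ)
    (hXa : Adapted ℱ X) (hYa : Adapted ℱ Y) (hZa : Adapted ℱ Z)
    (hXi : ∀ t, Integrable (X t) μ) (hYi : ∀ t, Integrable (Y t) μ)
    (hZi : ∀ t, Integrable (Z t) μ) (hVi : ∀ t, Integrable (V t) μ)
    (hXZ : ∀ t ω, X t ω ≤ Z t ω) (hZY : ∀ t ω, Z t ω ≤ Y t ω)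
    (htermX : ∀ ω, X T ω = Z T ω) (htermY : ∀ ω, Z T ω = Y T ω)
    (hVT : ∀ ω, V T ω = Z T ω)
    (hV : ∀ t, t < T → ∀ ω, V t ω = min (Y t ω) (max (X t ω) ((μ[V (t + 1) | ℱ t]) ω)))
    (t : ℕ) (ht : t ≤ T)
    (τs σs : Ω → ℕ)
    (hτs : ∀ ω, τs ω = sInf {u | t ≤ u ∧ u ≤ T ∧ V u ω = X u ω})
    (hσs : ∀ ω, σs ω = sInf {u | t ≤ u ∧ u ≤ T ∧ V u ω = Y u ω}) :
    IsStoppingTime ℱ (fun ω => (τs ω : WithTop ℕ)) ∧ IsStoppingTime ℱ (fun ω => (σs ω : WithTop ℕ)) ∧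
    (∀ ω, τs ω ∈ Set.Icc t T) ∧ (∀ ω, σs ω ∈ Set.Icc t T) ∧
    (∀ τ σ : Ω → ℕ, IsStoppingTime ℱ (fun ω => (τ ω : WithTop ℕ)) → IsStoppingTime ℱ (fun ω => (σ ω : WithTop ℕ)) →
      (∀ ω, τ ω ∈ Set.Icc t T) → (∀ ω, σ ω ∈ Set.Icc t T) →
      (μ[payoffD X Y Z τs σs | ℱ t] ≤ᵐ[μ] μ[payoffD X Y Z τs σ | ℱ t]) ∧
      (μ[payoffD X Y Z τ σs | ℱ t] ≤ᵐ[μ] μ[payoffD X Y Z τs σs | ℱ t])) := by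
  classical
  have hXY : ∀ u ω, X u ω ≤ Y u ω := fun u ω => (hXZ u ω).trans (hZY u ω)
  have hVa : ∀ u, u ≤ T → StronglyMeasurable[ℱ u] (V u) := by
    intro u hu
    rcases eq_or_lt_of_le hu with h | h
    · subst h
      rw [show V u = Z u from funext hVT]
      exact (hZa u).stronglyMeasurable
    · rw [show V u = fun ω => min (Y u ω) (max (X u ω) ((μ[V (u + 1) | ℱ u]) ω)) from
        funext (hV u h)]
      exact ((hYa u).min ((hXa u).max
        stronglyMeasurable_condExp.measurable)).stronglyMeasurable
  have hXV : ∀ u, u ≤ T → ∀ ω, X u ω ≤ V u ω := by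
    intro u hu ω
    rcases eq_or_lt_of_le hu with h | h
    · subst h; rw [hVT ω]; exact hXZ u ω
    · rw [hV u h ω]; exact le_min (hXY u ω) (le_max_left _ _)
  have hVY : ∀ u, u ≤ T → ∀ ω, V u ω ≤ Y u ω := by
    intro u hu ω
    rcases eq_or_lt_of_le hu with h | h
    · subst h; rw [hVT ω]; exact hZY u ω
    · rw [hV u h ω]; exact min_le_left _ _
  -- the sets hit by the two stopping times
  have hTmemX : ∀ ω, T ∈ {u | t ≤ u ∧ u ≤ T ∧ V u ω = X u ω} := by
    intro ω
    refine ⟨ht, le_rfl, ?_⟩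
    rw [hVT ω]; exact (htermX ω).symm
  have hTmemY : ∀ ω, T ∈ {u | t ≤ u ∧ u ≤ T ∧ V u ω = Y u ω} := by
    intro ω
    refine ⟨ht, le_rfl, ?_⟩
    rw [hVT ω]; exact htermY ω
  have hτsm : ∀ ω, τs ω ∈ {u | t ≤ u ∧ u ≤ T ∧ V u ω = X u ω} := by
    intro ω; rw [hτs ω]; exact Nat.sInf_mem ⟨T, hTmemX ω⟩
  have hσsm : ∀ ω, σs ω ∈ {u | t ≤ u ∧ u ≤ T ∧ V u ω = Y u ω} := by
    intro ω; rw [hσs ω]; exact Nat.sInf_mem ⟨T, hTmemY ω⟩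
  have hτslt : ∀ ω u, u < τs ω → ¬(t ≤ u ∧ u ≤ T ∧ V u ω = X u ω) := by
    intro ω u hu
    rw [hτs ω] at hu
    exact Nat.notMem_of_lt_sInf hu
  have hσslt : ∀ ω u, u < σs ω → ¬(t ≤ u ∧ u ≤ T ∧ V u ω = Y u ω) := by
    intro ω u hu
    rw [hσs ω] at hu
    exact Nat.notMem_of_lt_sInf hu
  have hτIcc : ∀ ω, τs ω ∈ Set.Icc t T := fun ω => ⟨(hτsm ω).1, (hτsm ω).2.1⟩
  have hσIcc : ∀ ω, σs ω ∈ Set.Icc t T := fun ω => ⟨(hσsm ω).1, (hσsm ω).2.1⟩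
  -- stopping time property
  have hstopping : ∀ (W : ℕ → Ω → ℝ) (ξ : Ω → ℕ), Adapted ℱ W →
      (∀ ω, ξ ω = sInf {u | t ≤ u ∧ u ≤ T ∧ V u ω = W u ω}) →
      (∀ ω, ξ ω ∈ {u | t ≤ u ∧ u ≤ T ∧ V u ω = W u ω}) → IsStoppingTime ℱ (fun ω => (ξ ω : WithTop ℕ)) := by
    intro W ξ hWa hξ hξm; refine st_of ?_; intro n
    have hset : {ω | ξ ω ≤ n}
        = ⋃ u ∈ Finset.range (n + 1), {ω | t ≤ u ∧ u ≤ T ∧ V u ω = W u ω} := by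
      ext ω
      simp only [Set.mem_setOf_eq, Set.mem_iUnion, Finset.mem_range, Nat.lt_succ_iff,
        exists_prop]
      constructor
      · intro h
        exact ⟨ξ ω, h, hξm ω⟩
      · rintro ⟨u, hun, hmem⟩
        rw [hξ ω]
        exact le_trans (Nat.sInf_le hmem) hun
    rw [hset]
    refine MeasurableSet.biUnion (Finset.range (n + 1)).countable_toSet ?_
    intro u hu
    have hun : u ≤ n := Nat.lt_succ_iff.mp (Finset.mem_range.mp hu)
    by_cases hc : t ≤ u ∧ u ≤ T
    · have heq : {ω | t ≤ u ∧ u ≤ T ∧ V u ω = W u ω} = {ω | V u ω = W u ω} := by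
        ext ω; simp [hc.1, hc.2]
      rw [heq]
      exact ℱ.mono hun _ (StronglyMeasurable.measurableSet_eq_fun (hVa u hc.2) (hWa u).stronglyMeasurable)
    · have heq : {ω | t ≤ u ∧ u ≤ T ∧ V u ω = W u ω} = ∅ := by
        ext ω
        simp only [Set.mem_setOf_eq, Set.mem_empty_iff_false, iff_false]
        intro h
        exact hc ⟨h.1, h.2.1⟩
      rw [heq]
      exact @MeasurableSet.empty _ (ℱ n)
  have hstX : IsStoppingTime ℱ (fun ω => (τs ω : WithTop ℕ)) := hstopping X τs hXa hτs hτsm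
  have hstY : IsStoppingTime ℱ (fun ω => (σs ω : WithTop ℕ)) := hstopping Y σs hYa hσs hσsm
  -- one-step sub/supermartingale properties before the hitting times
  have hsubX : ∀ u, t ≤ u → u < T → ∀ ω, u < τs ω → V u ω ≤ (μ[V (u + 1) | ℱ u]) ω := by
    intro u htu huT ω hlt
    have hne : V u ω ≠ X u ω := fun h => hτslt ω u hlt ⟨htu, le_of_lt huT, h⟩
    have hx : X u ω < V u ω := lt_of_le_of_ne (hXV u (le_of_lt huT) ω) (Ne.symm hne)
    have hveq := hV u huT ω
    rcases le_or_gt ((μ[V (u + 1) | ℱ u]) ω) (X u ω) with hE | hE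
    · exfalso
      have : V u ω ≤ X u ω := by
        rw [hveq, max_eq_left hE]
        exact min_le_right _ _
      linarith
    · rw [hveq, max_eq_right (le_of_lt hE)]
      exact min_le_right _ _
  have hsupY : ∀ u, t ≤ u → u < T → ∀ ω, u < σs ω → (μ[V (u + 1) | ℱ u]) ω ≤ V u ω := by
    intro u htu huT ω hlt
    have hne : V u ω ≠ Y u ω := fun h => hσslt ω u hlt ⟨htu, le_of_lt huT, h⟩
    have hy : V u ω < Y u ω := lt_of_le_of_ne (hVY u (le_of_lt huT) ω) hne
    have hveq := hV u huT ω
    rcases le_total (Y u ω) (max (X u ω) ((μ[V (u + 1) | ℱ u]) ω)) with hc | hc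
    · exfalso
      rw [hveq, min_eq_left hc] at hy
      exact lt_irrefl _ hy
    · rw [hveq, min_eq_right hc]
      exact le_max_right _ _
  -- payoff as a doubly-stopped process
  set U : ℕ → ℕ → Ω → ℝ :=
    fun a b ω => if a < b then X a ω else if b < a then Y b ω else Z b ω with hUdef
  have hUi : ∀ a b, a ≤ T → b ≤ T → Integrable (U a b) μ := by
    intro a b _ _
    by_cases h1 : a < b
    · simpa [hUdef, h1] using hXi a
    · by_cases h2 : b < a
      · simpa [hUdef, h1, h2] using hYi b
      · simpa [hUdef, h1, h2] using hZi b
  have hpay : ∀ (τ' σ' : Ω → ℕ), payoffD X Y Z τ' σ' = fun ω => U (τ' ω) (σ' ω) ω :=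
    fun _ _ => rfl
  have hpayi : ∀ (τ' σ' : Ω → ℕ), IsStoppingTime ℱ (fun ω => (τ' ω : WithTop ℕ)) → IsStoppingTime ℱ (fun ω => (σ' ω : WithTop ℕ)) →
      (∀ ω, σ' ω ∈ Set.Icc t T) → (∀ ω, τ' ω ∈ Set.Icc t T) →
      Integrable (payoffD X Y Z τ' σ') μ := by
    intro τ' σ' hτ' hσ' hσ'I hτ'I
    rw [hpay]
    exact dynkin_integrable_pair μ T τ' σ' (fun ω => (hτ'I ω).2) (fun ω => (hσ'I ω).2)
      (fun a => ℱ.le a _ (st_eq hτ' a))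
      (fun b => ℱ.le b _ (st_eq hσ' b)) U hUi
  have hstoppedi : ∀ (ρ : Ω → ℕ), IsStoppingTime ℱ (fun ω => (ρ ω : WithTop ℕ)) → (∀ ω, ρ ω ≤ T) →
      Integrable (fun ω => V (ρ ω) ω) μ := by
    intro ρ hρ hρT
    exact dynkin_integrable_pair μ T ρ ρ hρT hρT
      (fun a => ℱ.le a _ (st_eq hρ a))
      (fun a => ℱ.le a _ (st_eq hρ a))
      (fun a _ => V a) (fun a _ _ _ => hVi a)
  refine ⟨hstX, hstY, hτIcc, hσIcc, ?_⟩
  intro τ σ hτ hσ hτI hσI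
  -- the equilibrium value: ρ0 = min τs σs
  set ρ0 : Ω → ℕ := fun ω => min (τs ω) (σs ω) with hρ0def
  have hρ0 : IsStoppingTime ℱ (fun ω => (ρ0 ω : WithTop ℕ)) := st_min hstX hstY
  have hρ0t : ∀ ω, t ≤ ρ0 ω := fun ω => le_min (hτIcc ω).1 (hσIcc ω).1
  have hρ0T : ∀ ω, ρ0 ω ≤ T := fun ω => le_trans (min_le_left _ _) (hτIcc ω).2
  have hle0 : V t ≤ᵐ[μ] μ[(fun ω => V (ρ0 ω) ω) | ℱ t] :=
    dynkin_core T V hVa hVi t ht ρ0 hρ0 hρ0t hρ0T (fun u htu huT => ae_of_all μ fun ω hlt =>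
      hsubX u htu huT ω (lt_of_lt_of_le hlt (min_le_left _ _)))
  have hge0 : μ[(fun ω => V (ρ0 ω) ω) | ℱ t] ≤ᵐ[μ] V t :=
    dynkin_core_ge T V hVa hVi t ht ρ0 hρ0 hρ0t hρ0T (fun u htu huT => ae_of_all μ fun ω hlt =>
      hsupY u htu huT ω (lt_of_lt_of_le hlt (min_le_right _ _)))
  have hpay0 : payoffD X Y Z τs σs = fun ω => V (ρ0 ω) ω := by
    funext ω
    unfold payoffD
    rcases lt_trichotomy (τs ω) (σs ω) with h | h | h
    · rw [if_pos h]
      have hm : ρ0 ω = τs ω := min_eq_left (le_of_lt h)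
      rw [hm, (hτsm ω).2.2]
    · rw [if_neg (by omega), if_neg (by omega)]
      have hm : ρ0 ω = σs ω := by rw [hρ0def]; simp [h]
      have h1 := (hτsm ω).2.2
      have h2 := (hσsm ω).2.2
      rw [h] at h1
      have hXZu := hXZ (σs ω) ω
      have hZYu := hZY (σs ω) ω
      rw [hm]
      linarith
    · rw [if_neg (by omega), if_pos h]
      have hm : ρ0 ω = σs ω := min_eq_right (le_of_lt h)
      rw [hm, (hσsm ω).2.2]
  constructor
  · -- first inequality : E[R(τs,σs)|F_t] ≤ E[R(τs,σ)|F_t]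
    set ρ1 : Ω → ℕ := fun ω => min (τs ω) (σ ω) with hρ1def
    have hρ1 : IsStoppingTime ℱ (fun ω => (ρ1 ω : WithTop ℕ)) := st_min hstX hσ
    have hρ1t : ∀ ω, t ≤ ρ1 ω := fun ω => le_min (hτIcc ω).1 (hσI ω).1
    have hρ1T : ∀ ω, ρ1 ω ≤ T := fun ω => le_trans (min_le_left _ _) (hτIcc ω).2
    have hle1 : V t ≤ᵐ[μ] μ[(fun ω => V (ρ1 ω) ω) | ℱ t] :=
      dynkin_core T V hVa hVi t ht ρ1 hρ1 hρ1t hρ1T (fun u htu huT => ae_of_all μ fun ω hlt =>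
        hsubX u htu huT ω (lt_of_lt_of_le hlt (min_le_left _ _)))
    have hcmp1 : ∀ ω, V (ρ1 ω) ω ≤ payoffD X Y Z τs σ ω := by
      intro ω
      unfold payoffD
      rcases lt_trichotomy (τs ω) (σ ω) with h | h | h
      · rw [if_pos h]
        have hm : ρ1 ω = τs ω := min_eq_left (le_of_lt h)
        rw [hm, (hτsm ω).2.2]
      · rw [if_neg (by omega), if_neg (by omega)]
        have hm : ρ1 ω = τs ω := by rw [hρ1def]; simp [h]
        rw [hm, (hτsm ω).2.2, h]
        exact hXZ (σ ω) ω
      · rw [if_neg (by omega), if_pos h]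
        have hm : ρ1 ω = σ ω := min_eq_right (le_of_lt h)
        rw [hm]
        exact hVY (σ ω) (hσI ω).2 ω
    have hmono1 : μ[(fun ω => V (ρ1 ω) ω) | ℱ t] ≤ᵐ[μ] μ[payoffD X Y Z τs σ | ℱ t] :=
      condExp_mono (hstoppedi ρ1 hρ1 hρ1T) (hpayi τs σ hstX hσ hσI hτIcc)
        (ae_of_all μ hcmp1)
    calc μ[payoffD X Y Z τs σs | ℱ t]
        =ᵐ[μ] μ[(fun ω => V (ρ0 ω) ω) | ℱ t] := by rw [hpay0]
      _ ≤ᵐ[μ] V t := hge0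
      _ ≤ᵐ[μ] μ[(fun ω => V (ρ1 ω) ω) | ℱ t] := hle1
      _ ≤ᵐ[μ] μ[payoffD X Y Z τs σ | ℱ t] := hmono1
  · -- second inequality : E[R(τ,σs)|F_t] ≤ E[R(τs,σs)|F_t]
    set ρ2 : Ω → ℕ := fun ω => min (τ ω) (σs ω) with hρ2def
    have hρ2 : IsStoppingTime ℱ (fun ω => (ρ2 ω : WithTop ℕ)) := st_min hτ hstY
    have hρ2t : ∀ ω, t ≤ ρ2 ω := fun ω => le_min (hτI ω).1 (hσIcc ω).1
    have hρ2T : ∀ ω, ρ2 ω ≤ T := fun ω => le_trans (min_le_left _ _) (hτI ω).2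
    have hge2 : μ[(fun ω => V (ρ2 ω) ω) | ℱ t] ≤ᵐ[μ] V t :=
      dynkin_core_ge T V hVa hVi t ht ρ2 hρ2 hρ2t hρ2T (fun u htu huT => ae_of_all μ fun ω hlt =>
        hsupY u htu huT ω (lt_of_lt_of_le hlt (min_le_right _ _)))
    have hcmp2 : ∀ ω, payoffD X Y Z τ σs ω ≤ V (ρ2 ω) ω := by
      intro ω
      unfold payoffD
      rcases lt_trichotomy (τ ω) (σs ω) with h | h | h
      · rw [if_pos h]
        have hm : ρ2 ω = τ ω := min_eq_left (le_of_lt h)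
        rw [hm]
        exact hXV (τ ω) (hτI ω).2 ω
      · rw [if_neg (by omega), if_neg (by omega)]
        have hm : ρ2 ω = σs ω := by rw [hρ2def]; simp [h]
        rw [hm, (hσsm ω).2.2]
        exact hZY (σs ω) ω
      · rw [if_neg (by omega), if_pos h]
        have hm : ρ2 ω = σs ω := min_eq_right (le_of_lt h)
        rw [hm, (hσsm ω).2.2]
    have hmono2 : μ[payoffD X Y Z τ σs | ℱ t] ≤ᵐ[μ] μ[(fun ω => V (ρ2 ω) ω) | ℱ t] :=
      condExp_mono (hpayi τ σs hτ hstY hσIcc hτI) (hstoppedi ρ2 hρ2 hρ2T)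
        (ae_of_all μ hcmp2)
    calc μ[payoffD X Y Z τ σs | ℱ t]
        ≤ᵐ[μ] μ[(fun ω => V (ρ2 ω) ω) | ℱ t] := hmono2
      _ ≤ᵐ[μ] V t := hge2
      _ ≤ᵐ[μ] μ[(fun ω => V (ρ0 ω) ω) | ℱ t] := hle0
      _ =ᵐ[μ] μ[payoffD X Y Z τs σs | ℱ t] := by rw [hpay0]
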